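/- Let α > 1 and consider the Prelec weighting function T(p) = exp(−(−ln p)^α) with conjugate T̃(p) = 1 − exp(−(−ln(1−p))^α). Then the point p*(α) := inf{p ∈ [0,1) : T̃′(p) ≥ (1 − T̃(p))/(1 − p)} satisfies p*(α) = 1 − exp(−α^{−1/(α−1)}). -/

import Mathlib

open Set

noncomputable section

/-- The conjugate `T̃(p) = 1 − exp(−(−ln(1−p))^α)` of the Prelec probability weighting
function `T(p) = exp(−(−ln p)^α)`. -/
def prelecConj (α : ℝ) : ℝ → ℝ :=
  fun p => 1 - Real.exp (-((-Real.log (1 - p)) ^ α))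

lemma prelecConj_hasDerivAt (α : ℝ) (hα : 1 ≤ α) {p : ℝ} (hp : p < 1) :
    HasDerivAt (prelecConj α)
      (Real.exp (-((-Real.log (1 - p)) ^ α)) *
        (α * (-Real.log (1 - p)) ^ (α - 1) / (1 - p))) p := by
  have h1p : (0:ℝ) < 1 - p := by linarith
  have hlin : HasDerivAt (fun x : ℝ => 1 - x) (-1) p := (hasDerivAt_id p).const_sub 1
  have hlog := hlin.log h1p.ne'
  have hneg := hlog.neg
  have hrpow := hneg.rpow_const (p := α) (Or.inr hα)
  have hexp := hrpow.neg.exp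
  have hfin := hexp.const_sub 1
  refine HasDerivAt.congr_deriv hfin ?_
  simp only [Pi.neg_apply]
  ring

theorem statement11 (α : ℝ) (hα : 1 < α) :
    sInf {p : ℝ | p ∈ Ico (0:ℝ) 1 ∧
        (1 - prelecConj α p) / (1 - p) ≤ deriv (prelecConj α) p}
      = 1 - Real.exp (-(α ^ (-1 / (α - 1)))) := by
  have hα0 : (0:ℝ) < α := by linarith
  set c : ℝ := α ^ (-1 / (α - 1)) with hc
  have hc0 : 0 < c := Real.rpow_pos_of_pos hα0 _
  have hca : c ^ (α - 1) = 1 / α := by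
    rw [hc, ← Real.rpow_mul hα0.le]
    have h1 : -1 / (α - 1) * (α - 1) = -1 := by
      have : α - 1 ≠ 0 := by linarith
      field_simp
    rw [h1, Real.rpow_neg_one, one_div]
  have hset : {p : ℝ | p ∈ Ico (0:ℝ) 1 ∧
        (1 - prelecConj α p) / (1 - p) ≤ deriv (prelecConj α) p}
      = Ico (1 - Real.exp (-c)) 1 := by
    ext p
    simp only [mem_setOf_eq, mem_Ico]
    constructor
    · rintro ⟨⟨hp0, hp1⟩, hcond⟩
      refine ⟨?_, hp1⟩
      have h1p : (0:ℝ) < 1 - p := by linarith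
      have hd := (prelecConj_hasDerivAt α hα.le hp1).deriv
      rw [hd] at hcond
      have hT : 1 - prelecConj α p = Real.exp (-((-Real.log (1 - p)) ^ α)) := by
        simp [prelecConj]
      rw [hT] at hcond
      set u := -Real.log (1 - p) with hu
      have hu0 : 0 ≤ u := by
        rw [hu, neg_nonneg]
        exact Real.log_nonpos h1p.le (by linarith)
      have hE : 0 < Real.exp (-(u ^ α)) := Real.exp_pos _
      have key : 1 ≤ α * u ^ (α - 1) := by
        rw [← mul_div_assoc, div_le_div_iff₀ h1p h1p] at hcond
        nlinarith [mul_pos hE h1p]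
      -- deduce c ≤ u
      have hcu : c ≤ u := by
        by_contra hlt
        push_neg at hlt
        have : u ^ (α - 1) < c ^ (α - 1) := by
          apply Real.rpow_lt_rpow hu0 hlt (by linarith)
        rw [hca] at this
        have : α * u ^ (α - 1) < 1 := by
          rw [lt_div_iff₀ hα0] at this
          linarith [mul_comm α (u ^ (α - 1))]
        linarith
      -- c ≤ -log(1-p)  ⟹  1 - exp(-c) ≤ p
      have : Real.log (1 - p) ≤ -c := by linarith [hcu]
      have := (Real.log_le_iff_le_exp h1p).mp this
      linarith
    · rintro ⟨hpl, hp1⟩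
      have hexpc : Real.exp (-c) < 1 := by
        rw [Real.exp_lt_one_iff]; linarith
      have hp0 : 0 ≤ p := by linarith
      have h1p : (0:ℝ) < 1 - p := by linarith
      refine ⟨⟨hp0, hp1⟩, ?_⟩
      have hd := (prelecConj_hasDerivAt α hα.le hp1).deriv
      rw [hd]
      have hT : 1 - prelecConj α p = Real.exp (-((-Real.log (1 - p)) ^ α)) := by
        simp [prelecConj]
      rw [hT]
      set u := -Real.log (1 - p) with hu
      have hcu : c ≤ u := by
        have : 1 - p ≤ Real.exp (-c) := by linarith
        have := Real.log_le_log h1p this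
        rw [Real.log_exp] at this
        linarith
      have hu0 : 0 < u := lt_of_lt_of_le hc0 hcu
      have key : 1 ≤ α * u ^ (α - 1) := by
        have h1 : c ^ (α - 1) ≤ u ^ (α - 1) :=
          Real.rpow_le_rpow hc0.le hcu (by linarith)
        rw [hca] at h1
        rw [div_le_iff₀ hα0] at h1
        nlinarith
      have hE : 0 < Real.exp (-(u ^ α)) := Real.exp_pos _
      rw [← mul_div_assoc, div_le_div_iff₀ h1p h1p]
      nlinarith [mul_pos hE h1p]
  rw [hset]
  apply csInf_Ico
  have : Real.exp (-c) < 1 := by rw [Real.exp_lt_one_iff]; linarith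
  have : 0 < Real.exp (-c) := Real.exp_pos _
  linarith

end
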